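/- Assume M is symmetric positive definite, all eigenvalues of M lie in an interval [a, b] with 0, 1 ∉ [a, b], and m < k. Starting from u₀, let u_j = q(u_{j−1}) for j = 1, …, k, and let u_{k+1} be produced by a single NGMRES(m) step from u_{k−m}, …, u_k. Then ‖r_{k+1}‖ ≤ ε(a, b, m+1) · ‖M r_k‖. -/

import Mathlib

open Matrix Polynomial Set

noncomputable section

/-- Matrix–vector product, landing in Euclidean space. -/
def mulVecE {n : ℕ} (M : Matrix (Fin n) (Fin n) ℝ) (v : EuclideanSpace ℝ (Fin n)) :
    EuclideanSpace ℝ (Fin n) :=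
  WithLp.toLp 2 (M.mulVec v)

/-- Residual `r(u) = A u - b`. -/
def res {n : ℕ} (A : Matrix (Fin n) (Fin n) ℝ) (b u : EuclideanSpace ℝ (Fin n)) :
    EuclideanSpace ℝ (Fin n) :=
  mulVecE A u - b

/-- Richardson fixed-point map `q(u) = (I - A) u + b = M u + b` with `M = I - A`. -/
def fp {n : ℕ} (A : Matrix (Fin n) (Fin n) ℝ) (b u : EuclideanSpace ℝ (Fin n)) :
    EuclideanSpace ℝ (Fin n) :=
  mulVecE (1 - A) u + b

/-- The NGMRES(m) least-squares objective at step `k`: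
`β ↦ ‖r(q(u_k)) + Σ_{i=0}^m β_i (r(q(u_k)) - r(u_{k-i}))‖`. -/
def ngObj {n : ℕ} (A : Matrix (Fin n) (Fin n) ℝ) (b : EuclideanSpace ℝ (Fin n))
    (m : ℕ) (prev : ℕ → EuclideanSpace ℝ (Fin n)) (k : ℕ) (β : Fin (m+1) → ℝ) : ℝ :=
  ‖res A b (fp A b (prev k)) +
    ∑ i : Fin (m+1), β i • (res A b (fp A b (prev k)) - res A b (prev (k - (i : ℕ))))‖

/-- `next` is produced from `prev (k-m), …, prev k` by a single NGMRES(m) step: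
`next = q(u_k) + Σ_{i=0}^m β_i (q(u_k) - u_{k-i})` where `β` minimizes the
least-squares objective `ngObj`. -/
def NGMRESStep {n : ℕ} (A : Matrix (Fin n) (Fin n) ℝ) (b : EuclideanSpace ℝ (Fin n))
    (m : ℕ) (prev : ℕ → EuclideanSpace ℝ (Fin n)) (k : ℕ)
    (next : EuclideanSpace ℝ (Fin n)) : Prop :=
  ∃ β : Fin (m+1) → ℝ,
    (∀ γ : Fin (m+1) → ℝ, ngObj A b m prev k β ≤ ngObj A b m prev k γ) ∧
    next = fp A b (prev k) +
      ∑ i : Fin (m+1), β i • (fp A b (prev k) - prev (k - (i : ℕ)))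

/-- The spectral (ℓ²-operator) norm of a matrix. -/
def opNorm {n : ℕ} (M : Matrix (Fin n) (Fin n) ℝ) : ℝ :=
  ‖(Matrix.toEuclideanCLM (𝕜 := ℝ) M : EuclideanSpace ℝ (Fin n) →L[ℝ] EuclideanSpace ℝ (Fin n))‖

/-- The 2-norm condition number `κ₂(U) = ‖U‖ ‖U⁻¹‖`. -/
def condNum {n : ℕ} (U : Matrix (Fin n) (Fin n) ℝ) : ℝ :=
  opNorm U * opNorm U⁻¹

/-- `ε(a,b,s)`: minimum over real polynomials `p` of degree at most `s` with `p(1) = 1`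
of `max_{t ∈ [1/b, 1/a]} |p(t)|`. -/
def eps (a b : ℝ) (s : ℕ) : ℝ :=
  sInf {t : ℝ | ∃ p : Polynomial ℝ, p.natDegree ≤ s ∧ p.eval 1 = 1 ∧
    t = sSup ((fun x => |p.eval x|) '' Set.Icc (1/b) (1/a))}

/-- `χ(s)`: minimum over real polynomials `p` of degree at most `s` with `p(1) = 1`
of `max_{λ ∈ Σ(M)} |p(λ)|`, where `Σ(M)` is the set of eigenvalues of `M`. -/
def chiSp {n : ℕ} (M : Matrix (Fin n) (Fin n) ℝ) (s : ℕ) : ℝ :=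
  sInf {t : ℝ | ∃ p : Polynomial ℝ, p.natDegree ≤ s ∧ p.eval 1 = 1 ∧
    t = sSup ((fun x => |p.eval x|) '' spectrum ℝ M)}

/-- The Krylov subspace `K_k(A, r) = span{r, Ar, …, A^{k-1} r}`. -/
def Krylov {n : ℕ} (A : Matrix (Fin n) (Fin n) ℝ) (r : EuclideanSpace ℝ (Fin n)) (k : ℕ) :
    Submodule ℝ (EuclideanSpace ℝ (Fin n)) :=
  Submodule.span ℝ (Set.range fun i : Fin k => mulVecE (A ^ (i : ℕ)) r)

/-- The matrix `S_k = [u_{k-m+1}-u_{k-m}, …, u_k-u_{k-1}, q(u_k)-u_k] ∈ ℝ^{n×(m+1)}`. -/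
def Smat {n : ℕ} (A : Matrix (Fin n) (Fin n) ℝ) (b : EuclideanSpace ℝ (Fin n))
    (prev : ℕ → EuclideanSpace ℝ (Fin n)) (k m : ℕ) :
    Matrix (Fin n) (Fin (m+1)) ℝ :=
  Matrix.of fun r c =>
    if (c : ℕ) < m then prev (k - m + c + 1) r - prev (k - m + c) r
    else fp A b (prev k) r - prev k r

/-- `u` is the sequence of aNGMRES(m, p) iterates (with `m = ⊤` giving aNGMRES(∞, p)):
if `p ∤ k` then `u_k = q(u_{k-1})`, and if `p ∣ k` then `u_k` is produced by one
NGMRES(min(m, k-1)) step from `u_{k-1-m_k}, …, u_{k-1}`. -/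
def aNGMRES {n : ℕ} (A : Matrix (Fin n) (Fin n) ℝ) (b : EuclideanSpace ℝ (Fin n))
    (m : ℕ∞) (p : ℕ) (u : ℕ → EuclideanSpace ℝ (Fin n)) : Prop :=
  ∀ k, 1 ≤ k →
    (¬ p ∣ k → u k = fp A b (u (k-1))) ∧
    (p ∣ k → NGMRESStep A b (min m ((k : ℕ∞) - 1)).toNat u (k-1) (u k))

variable {n : ℕ}

lemma clm_apply (A : Matrix (Fin n) (Fin n) ℝ) (x : EuclideanSpace ℝ (Fin n)) :
    toEuclideanCLM (𝕜:=ℝ) A x = mulVecE A x := rfl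
lemma mulVecE_add (A : Matrix (Fin n) (Fin n) ℝ) (x y : EuclideanSpace ℝ (Fin n)) :
    mulVecE A (x + y) = mulVecE A x + mulVecE A y := by
  rw [← clm_apply, ← clm_apply, ← clm_apply, map_add]
lemma mulVecE_sub (A : Matrix (Fin n) (Fin n) ℝ) (x y : EuclideanSpace ℝ (Fin n)) :
    mulVecE A (x - y) = mulVecE A x - mulVecE A y := by
  rw [← clm_apply, ← clm_apply, ← clm_apply, map_sub]
lemma mulVecE_smul (A : Matrix (Fin n) (Fin n) ℝ) (r : ℝ) (x : EuclideanSpace ℝ (Fin n)) :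
    mulVecE A (r • x) = r • mulVecE A x := by
  rw [← clm_apply, ← clm_apply, _root_.map_smul]
lemma mulVecE_sum {ι : Type*} (s : Finset ι) (A : Matrix (Fin n) (Fin n) ℝ)
    (f : ι → EuclideanSpace ℝ (Fin n)) :
    mulVecE A (∑ i ∈ s, f i) = ∑ i ∈ s, mulVecE A (f i) := by
  simp only [← clm_apply]; exact map_sum _ _ _
lemma mulVecE_mul (A B : Matrix (Fin n) (Fin n) ℝ) (x : EuclideanSpace ℝ (Fin n)) :
    mulVecE (A * B) x = mulVecE A (mulVecE B x) := by
  simp [mulVecE, Matrix.mulVec_mulVec]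
lemma one_mulVecE (x : EuclideanSpace ℝ (Fin n)) : mulVecE 1 x = x := by
  simp [mulVecE]
lemma add_mulVecE (A B : Matrix (Fin n) (Fin n) ℝ) (x : EuclideanSpace ℝ (Fin n)) :
    mulVecE (A + B) x = mulVecE A x + mulVecE B x := by
  simp only [← clm_apply, map_add]; rfl
lemma sub_mulVecE (A B : Matrix (Fin n) (Fin n) ℝ) (x : EuclideanSpace ℝ (Fin n)) :
    mulVecE (A - B) x = mulVecE A x - mulVecE B x := by
  simp only [← clm_apply, map_sub]; rfl
-- F1
lemma res_fp (A : Matrix (Fin n) (Fin n) ℝ) (b u : EuclideanSpace ℝ (Fin n)) :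
    res A b (fp A b u) = mulVecE (1 - A) (res A b u) := by
  simp only [res, fp, mulVecE_add, mulVecE_sub, sub_mulVecE, one_mulVecE]
  abel

-- F2: res of earlier iterates in terms of v := M r_k
lemma res_back (A : Matrix (Fin n) (Fin n) ℝ) (b : EuclideanSpace ℝ (Fin n))
    (u : ℕ → EuclideanSpace ℝ (Fin n)) (k : ℕ)
    (hfp : ∀ j, 1 ≤ j → j ≤ k → u j = fp A b (u (j-1)))
    (hMA : (1 - A)⁻¹ * (1 - A) = 1)
    (i : ℕ) (hik : i < k) :
    res A b (u (k - i)) =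
      mulVecE (((1 - A)⁻¹) ^ (i+1)) (mulVecE (1 - A) (res A b (u k))) := by
  induction i with
  | zero =>
    simp only [Nat.sub_zero, zero_add, pow_one]
    rw [← mulVecE_mul, hMA, one_mulVecE]
  | succ i ih =>
    have hik' : i < k := Nat.lt_of_succ_lt hik
    have h1 : u (k - i) = fp A b (u (k - i - 1)) := by
      apply hfp (k - i) (by omega) (by omega)
    have h2 : res A b (u (k - i)) = mulVecE (1 - A) (res A b (u (k - (i+1)))) := by
      rw [h1, res_fp, Nat.sub_sub]
    have := ih hik'
    rw [h2] at this
    calc res A b (u (k - (i+1)))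
        = mulVecE ((1 - A)⁻¹ * (1 - A)) (res A b (u (k - (i+1)))) := by
          rw [hMA, one_mulVecE]
      _ = mulVecE ((1-A)⁻¹) (mulVecE (1-A) (res A b (u (k - (i+1))))) := mulVecE_mul _ _ _
      _ = mulVecE ((1-A)⁻¹) (mulVecE (((1 - A)⁻¹) ^ (i+1)) (mulVecE (1 - A) (res A b (u k)))) := by
          rw [this]
      _ = _ := by rw [← mulVecE_mul, ← pow_succ']

lemma zero_mulVecE (v : EuclideanSpace ℝ (Fin n)) : mulVecE (0 : Matrix (Fin n) (Fin n) ℝ) v = 0 := by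
  simp [mulVecE]
lemma sum_mulVecE {ι : Type*} (s : Finset ι) (B : ι → Matrix (Fin n) (Fin n) ℝ)
    (v : EuclideanSpace ℝ (Fin n)) :
    mulVecE (∑ i ∈ s, B i) v = ∑ i ∈ s, mulVecE (B i) v := by
  classical
  induction s using Finset.induction_on with
  | empty => simp [zero_mulVecE]
  | insert _ _ h ih => simp only [Finset.sum_insert h, add_mulVecE, ih]
lemma smul_mulVecE (r : ℝ) (B : Matrix (Fin n) (Fin n) ℝ) (v : EuclideanSpace ℝ (Fin n)) :
    mulVecE (r • B) v = r • mulVecE B v := by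
  simp only [mulVecE, Matrix.smul_mulVec, WithLp.toLp_smul]

lemma poly_id (m : ℕ) (N : Matrix (Fin n) (Fin n) ℝ) (v : EuclideanSpace ℝ (Fin n))
    (p : ℝ[X]) (hdeg : p.natDegree ≤ m+1) (h1 : p.eval 1 = 1) :
    v + ∑ i : Fin (m+1), (-(p.coeff ((i:ℕ)+1))) • (v - mulVecE (N^((i:ℕ)+1)) v)
      = mulVecE (aeval N p) v := by
  have hd2 : p.natDegree < m+2 := by omega
  have hs : p.eval 1 = ∑ i ∈ Finset.range (m+2), p.coeff i := by
    rw [Polynomial.eval_eq_sum_range' hd2]; simp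
  have hc0 : p.coeff 0 = 1 - ∑ i ∈ Finset.range (m+1), p.coeff (i+1) := by
    have hsplit := Finset.sum_range_succ' (fun i => p.coeff i) (m+1)
    rw [hs, hsplit] at h1; linarith
  have ha : aeval N p = ∑ i ∈ Finset.range (m+2), p.coeff i • N^i :=
    Polynomial.aeval_eq_sum_range' hd2 N
  rw [ha, sum_mulVecE, Finset.sum_range_succ' (fun i => mulVecE (p.coeff i • N^i) v) (m+1)]
  rw [Fin.sum_univ_eq_sum_range (fun i => (-(p.coeff (i+1))) • (v - mulVecE (N^(i+1)) v)) (m+1)]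
  simp only [smul_mulVecE, pow_zero, one_mulVecE]
  rw [hc0]
  simp only [neg_smul, smul_sub, Finset.sum_sub_distrib, Finset.sum_neg_distrib, sub_smul,
    one_smul, ← Finset.sum_smul]
  abel

lemma unitary_mem (U : Matrix.unitaryGroup (Fin n) ℝ) :
    toEuclideanCLM (𝕜:=ℝ) (U : Matrix (Fin n) (Fin n) ℝ) ∈
      unitary (EuclideanSpace ℝ (Fin n) →L[ℝ] EuclideanSpace ℝ (Fin n)) := by
  constructor
  · rw [← map_star, ← _root_.map_mul, Unitary.star_mul_self_of_mem U.2, _root_.map_one]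
  · rw [← map_star, ← _root_.map_mul, Unitary.mul_star_self_of_mem U.2, _root_.map_one]
lemma unitary_norm (U : Matrix.unitaryGroup (Fin n) ℝ) (x : EuclideanSpace ℝ (Fin n)) :
    ‖mulVecE (U : Matrix (Fin n) (Fin n) ℝ) x‖ = ‖x‖ := by
  rw [← clm_apply]
  exact ContinuousLinearMap.norm_map_of_mem_unitary (unitary_mem U) x
lemma diag_norm (d : Fin n → ℝ) (c : ℝ) (hc : 0 ≤ c) (h : ∀ i, |d i| ≤ c)
    (x : EuclideanSpace ℝ (Fin n)) : ‖mulVecE (diagonal d) x‖ ≤ c * ‖x‖ := by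
  have hx : mulVecE (diagonal d) x = fun i => d i * x i := by
    funext i; simp [mulVecE, Matrix.mulVec_diagonal]
  rw [EuclideanSpace.norm_eq, EuclideanSpace.norm_eq, hx]
  rw [← Real.sqrt_sq hc, ← Real.sqrt_mul (by positivity)]
  apply Real.sqrt_le_sqrt
  rw [Finset.mul_sum]
  apply Finset.sum_le_sum
  intro i _
  have := h i
  have hd : (d i)^2 ≤ c^2 := by
    obtain ⟨h1, h2⟩ := abs_le.mp (h i); exact sq_le_sq' h1 h2
  have : (d i * x i)^2 ≤ c^2 * (x i)^2 := by
    rw [mul_pow]; exact mul_le_mul_of_nonneg_right hd (sq_nonneg _)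
  calc ‖d i * x i‖^2 = (d i * x i)^2 := by rw [Real.norm_eq_abs, sq_abs]
    _ ≤ c^2 * (x i)^2 := this
    _ = c^2 * ‖x i‖^2 := by rw [Real.norm_eq_abs, sq_abs]

lemma herm_norm_bound (B : Matrix (Fin n) (Fin n) ℝ) (hB : B.IsHermitian) (c : ℝ) (hc : 0 ≤ c)
    (h : ∀ x ∈ spectrum ℝ B, |x| ≤ c) (v : EuclideanSpace ℝ (Fin n)) :
    ‖mulVecE B v‖ ≤ c * ‖v‖ := by
  have hspec := hB.spectral_theorem
  have hdcomp : mulVecE B v = mulVecE (hB.eigenvectorUnitary : Matrix (Fin n) (Fin n) ℝ)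
      (mulVecE (diagonal (RCLike.ofReal ∘ hB.eigenvalues))
        (mulVecE (star (hB.eigenvectorUnitary : Matrix (Fin n) (Fin n) ℝ)) v)) := by
    simp only [mulVecE, Matrix.mulVec_mulVec]
    rw [← mul_assoc, ← Unitary.conjStarAlgAut_apply (S := ℝ), ← hspec]
  rw [hdcomp, unitary_norm ⟨_, hB.eigenvectorUnitary.2⟩]
  have hstar : (star (hB.eigenvectorUnitary : Matrix (Fin n) (Fin n) ℝ)) ∈
      Matrix.unitaryGroup (Fin n) ℝ := Unitary.star_mem hB.eigenvectorUnitary.2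
  calc ‖mulVecE (diagonal (RCLike.ofReal ∘ hB.eigenvalues))
        (mulVecE (star (hB.eigenvectorUnitary : Matrix (Fin n) (Fin n) ℝ)) v)‖
      ≤ c * ‖mulVecE (star (hB.eigenvectorUnitary : Matrix (Fin n) (Fin n) ℝ)) v‖ := by
        apply diag_norm _ c hc
        intro i
        simpa using h _ (hB.eigenvalues_mem_spectrum_real i)
    _ = c * ‖v‖ := by rw [unitary_norm ⟨_, hstar⟩]

lemma spec_inv (M : Matrix (Fin n) (Fin n) ℝ) (hM : IsUnit M) (x : ℝ)
    (hx : x ∈ spectrum ℝ M⁻¹) : x⁻¹ ∈ spectrum ℝ M := by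
  lift M to (Matrix (Fin n) (Fin n) ℝ)ˣ using hM
  rw [← Matrix.coe_units_inv] at hx
  rw [← spectrum.map_inv] at hx
  exact Set.inv_mem_inv.mp (by simpa using hx)

lemma aeval_selfAdjoint (N : Matrix (Fin n) (Fin n) ℝ) (hN : N.IsHermitian) (p : ℝ[X]) :
    (aeval N p).IsHermitian := by
  have hsa : IsSelfAdjoint N := hN.isSelfAdjoint
  rw [← cfc_polynomial (R := ℝ) p N hsa]
  exact cfc_predicate _ N

lemma aeval_spectrum (N : Matrix (Fin n) (Fin n) ℝ) (hN : N.IsHermitian) (p : ℝ[X]) :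
    spectrum ℝ (aeval N p) = (fun x => p.eval x) '' spectrum ℝ N := by
  have hsa : IsSelfAdjoint N := hN.isSelfAdjoint
  rw [← cfc_polynomial (R := ℝ) p N hsa]
  exact cfc_map_spectrum _ N


/-- one-step NGMRES(m) residual bound in the SPD case,
`‖r_{k+1}‖ ≤ ε(a, b, m+1) · ‖M r_k‖`. -/
theorem stmt_5 {n m k : ℕ} (A : Matrix (Fin n) (Fin n) ℝ) (hA : IsUnit A)
    (hPD : ((1 : Matrix (Fin n) (Fin n) ℝ) - A).PosDef)
    (a c : ℝ) (hac : a < c)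
    (h0 : (0 : ℝ) ∉ Set.Icc a c) (h1 : (1 : ℝ) ∉ Set.Icc a c)
    (hspec : spectrum ℝ ((1 : Matrix (Fin n) (Fin n) ℝ) - A) ⊆ Set.Icc a c)
    (b : EuclideanSpace ℝ (Fin n)) (u : ℕ → EuclideanSpace ℝ (Fin n))
    (hfp : ∀ j, 1 ≤ j → j ≤ k → u j = fp A b (u (j-1)))
    (hmk : m < k) (next : EuclideanSpace ℝ (Fin n))
    (hstep : NGMRESStep A b m u k next) :
    ‖res A b next‖ ≤ eps a c (m+1) * ‖mulVecE (1 - A) (res A b (u k))‖ := by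
  classical
  obtain ⟨β, hmin, hnextEq⟩ := hstep
  -- the residual of `next` is the objective vector at `β`
  have hresnext : ‖res A b next‖ = ngObj A b m u k β := by
    rw [hnextEq]
    unfold ngObj
    congr 1
    simp only [res, mulVecE_add, mulVecE_sum, mulVecE_smul, mulVecE_sub,
      sub_sub_sub_cancel_right]
    abel
  rcases Nat.eq_zero_or_pos n with hn | hn
  · subst hn
    have e1 : res A b next = 0 := Subsingleton.elim _ _
    have e2 : mulVecE (1 - A) (res A b (u k)) = (0 : EuclideanSpace ℝ (Fin 0)) :=
      Subsingleton.elim _ _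
    rw [e1, e2]
    simp
  -- now n > 0
  have hMH : ((1 : Matrix (Fin n) (Fin n) ℝ) - A).IsHermitian := hPD.isHermitian
  have hMunit : IsUnit ((1 : Matrix (Fin n) (Fin n) ℝ) - A) := hPD.isUnit
  have hMA : ((1 : Matrix (Fin n) (Fin n) ℝ) - A)⁻¹ * (1 - A) = 1 :=
    Matrix.nonsing_inv_mul _ (Matrix.isUnit_iff_isUnit_det _ |>.mp hMunit)
  have hNH : ((1 : Matrix (Fin n) (Fin n) ℝ) - A)⁻¹.IsHermitian := hMH.inv
  -- positivity of a
  have hc0 : 0 < c := by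
    have i0 : Fin n := ⟨0, hn⟩
    have hmem := hMH.eigenvalues_mem_spectrum_real i0
    have hpos := hPD.eigenvalues_pos i0
    exact lt_of_lt_of_le hpos (hspec hmem).2
  have ha0 : 0 < a := by
    by_contra hle
    exact h0 ⟨le_of_not_gt hle, le_of_lt hc0⟩
  have hca : 1/c ≤ 1/a := one_div_le_one_div_of_le ha0 (le_of_lt hac)
  -- spectrum of the inverse
  have hNspec : spectrum ℝ ((1 : Matrix (Fin n) (Fin n) ℝ) - A)⁻¹ ⊆ Set.Icc (1/c) (1/a) := by
    intro x hx
    have hxinv := spec_inv _ hMunit x hx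
    have hxmem := hspec hxinv
    have hxinv_pos : 0 < x⁻¹ := lt_of_lt_of_le ha0 hxmem.1
    constructor
    · rw [one_div]
      have h := inv_anti₀ hxinv_pos hxmem.2
      rwa [inv_inv] at h
    · rw [one_div]
      have h := inv_anti₀ ha0 hxmem.1
      rwa [inv_inv] at h
  -- bound for each admissible polynomial
  have hkey : ∀ p : ℝ[X], p.natDegree ≤ m+1 → p.eval 1 = 1 →
      ‖res A b next‖ ≤ sSup ((fun x => |p.eval x|) '' Set.Icc (1/c) (1/a)) *
        ‖mulVecE (1 - A) (res A b (u k))‖ := by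
    intro p hdeg hp1
    have hbdd : BddAbove ((fun x => |p.eval x|) '' Set.Icc (1/c) (1/a)) :=
      (isCompact_Icc.image_of_continuousOn ((p.continuous.abs).continuousOn)).bddAbove
    have htnn : (0:ℝ) ≤ sSup ((fun x => |p.eval x|) '' Set.Icc (1/c) (1/a)) := by
      refine le_trans (abs_nonneg (p.eval (1/c))) (le_csSup hbdd ?_)
      exact ⟨1/c, ⟨le_refl _, hca⟩, rfl⟩
    have hub : ∀ x ∈ spectrum ℝ (aeval ((1 : Matrix (Fin n) (Fin n) ℝ) - A)⁻¹ p),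
        |x| ≤ sSup ((fun x => |p.eval x|) '' Set.Icc (1/c) (1/a)) := by
      intro x hx
      rw [aeval_spectrum _ hNH p] at hx
      obtain ⟨y, hy, rfl⟩ := hx
      exact le_csSup hbdd ⟨y, hNspec hy, rfl⟩
    have hback : ∀ i : Fin (m+1), res A b (u (k - (i:ℕ))) =
        mulVecE ((((1 : Matrix (Fin n) (Fin n) ℝ) - A)⁻¹)^((i:ℕ)+1))
          (mulVecE (1 - A) (res A b (u k))) := by
      intro i
      exact res_back A b u k hfp hMA (i:ℕ) (lt_of_le_of_lt (Nat.lt_succ_iff.mp i.2) hmk)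
    have hobj : ngObj A b m u k (fun i => -(p.coeff ((i:ℕ)+1))) =
        ‖mulVecE (aeval ((1 : Matrix (Fin n) (Fin n) ℝ) - A)⁻¹ p)
          (mulVecE (1 - A) (res A b (u k)))‖ := by
      unfold ngObj
      congr 1
      have := poly_id m ((1 : Matrix (Fin n) (Fin n) ℝ) - A)⁻¹
        (mulVecE (1 - A) (res A b (u k))) p hdeg hp1
      rw [← this]
      simp only [res_fp, hback]
    calc ‖res A b next‖ ≤ ngObj A b m u k (fun i => -(p.coeff ((i:ℕ)+1))) :=
          hresnext ▸ hmin _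
      _ = _ := hobj
      _ ≤ _ := herm_norm_bound _ (aeval_selfAdjoint _ hNH p) _ htnn hub _
  -- conclude via sInf
  have hXp : (Polynomial.X^(m+1) : ℝ[X]).natDegree ≤ m+1 := by simp
  have hXe : (Polynomial.X^(m+1) : ℝ[X]).eval 1 = 1 := by simp
  rcases eq_or_lt_of_le (norm_nonneg (mulVecE (1 - A) (res A b (u k)))) with hv0 | hvpos
  · have hb := hkey (Polynomial.X^(m+1)) hXp hXe
    rw [← hv0, mul_zero] at hb
    rw [← hv0, mul_zero]
    exact hb
  · have hlow : ∀ t ∈ {t : ℝ | ∃ p : Polynomial ℝ, p.natDegree ≤ m+1 ∧ p.eval 1 = 1 ∧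
        t = sSup ((fun x => |p.eval x|) '' Set.Icc (1/c) (1/a))},
        ‖res A b next‖ / ‖mulVecE (1 - A) (res A b (u k))‖ ≤ t := by
      rintro t ⟨p, hdeg, hp1, rfl⟩
      rw [div_le_iff₀ hvpos]
      exact hkey p hdeg hp1
    have hSne : {t : ℝ | ∃ p : Polynomial ℝ, p.natDegree ≤ m+1 ∧ p.eval 1 = 1 ∧
        t = sSup ((fun x => |p.eval x|) '' Set.Icc (1/c) (1/a))}.Nonempty :=
      ⟨_, Polynomial.X^(m+1), hXp, hXe, rfl⟩
    have hfin := le_csInf hSne hlow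
    rw [div_le_iff₀ hvpos] at hfin
    exact hfin

end
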